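/- Let G be an extraspecial p-group with |G/Z(G)| = p^k. Then the number of z-classes of G is (p^k − 1)/(p − 1) + 1. -/

import Mathlib

open Pointwise
open scoped commutatorElement

/-- Two elements of a group are z-equivalent if their centralizers are conjugate. -/
def zEquiv (G : Type*) [Group G] (x y : G) : Prop :=
  ∃ g : ConjAct G, g • Subgroup.centralizer {x} = Subgroup.centralizer {y}

/-- A finite `p`-group is extraspecial if its center equals its commutator subgroup
and has order `p`. -/
def IsExtraspecial (p : ℕ) (G : Type*) [Group G] : Prop :=
  IsPGroup p G ∧ Subgroup.center G = commutator G ∧ Nat.card (Subgroup.center G) = p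

section Aux
variable {G : Type*} [Group G]

theorem aux_pow_eq_one_iff {p j : ℕ} (hp : p.Prime) {a : G} (ha : a ^ p = 1)
    (hj : ¬ p ∣ j) : a ^ j = 1 ↔ a = 1 := by
  constructor
  · intro h
    rcases hp.eq_one_or_self_of_dvd _ (orderOf_dvd_of_pow_eq_one ha) with h1 | h1
    · exact orderOf_eq_one_iff.mp h1
    · exact absurd (h1 ▸ orderOf_dvd_of_pow_eq_one h) hj
  · intro h; rw [h, one_pow]

theorem comm_mul_left (h : ∀ a b : G, ⁅a, b⁆ ∈ Subgroup.center G) (x y g : G) :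
    ⁅x * y, g⁆ = ⁅x, g⁆ * ⁅y, g⁆ := by
  have hc := Subgroup.mem_center_iff.mp (h y g)
  calc ⁅x*y,g⁆ = x * (⁅y,g⁆ * (g * x⁻¹ * g⁻¹)) := by group
    _ = x * ((g * x⁻¹ * g⁻¹) * ⁅y,g⁆) := by rw [← hc]
    _ = ⁅x,g⁆ * ⁅y,g⁆ := by group

theorem comm_mul_right (h : ∀ a b : G, ⁅a, b⁆ ∈ Subgroup.center G) (x g g' : G) :
    ⁅x, g * g'⁆ = ⁅x, g⁆ * ⁅x, g'⁆ := by
  have hc := Subgroup.mem_center_iff.mp (h x g')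
  calc ⁅x,g*g'⁆ = ⁅x,g⁆ * (g * ⁅x,g'⁆ * g⁻¹) := by group
    _ = ⁅x,g⁆ * (⁅x,g'⁆ * g * g⁻¹) := by rw [hc]
    _ = ⁅x,g⁆ * ⁅x,g'⁆ := by group

theorem comm_pow_left (h : ∀ a b : G, ⁅a, b⁆ ∈ Subgroup.center G) (x g : G) (n : ℕ) :
    ⁅x ^ n, g⁆ = ⁅x, g⁆ ^ n := by
  induction n with
  | zero => simp [commutatorElement_def]
  | succ n ih => rw [pow_succ, comm_mul_left h, ih, pow_succ]

theorem comm_pow_right (h : ∀ a b : G, ⁅a, b⁆ ∈ Subgroup.center G) (x g : G) (n : ℕ) :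
    ⁅x, g ^ n⁆ = ⁅x, g⁆ ^ n := by
  induction n with
  | zero => simp [commutatorElement_def]
  | succ n ih => rw [pow_succ, comm_mul_right h, ih, pow_succ]

theorem comm_inv_left (h : ∀ a b : G, ⁅a, b⁆ ∈ Subgroup.center G) (x g : G) :
    ⁅x⁻¹, g⁆ = ⁅x, g⁆⁻¹ := by
  have := comm_mul_left h x⁻¹ x g
  simp only [inv_mul_cancel] at this
  have h1 : ⁅(1:G), g⁆ = 1 := by group
  rw [h1] at this
  exact eq_inv_of_mul_eq_one_left this.symm

theorem comm_inv_right (h : ∀ a b : G, ⁅a, b⁆ ∈ Subgroup.center G) (x g : G) :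
    ⁅x, g⁻¹⁆ = ⁅x, g⁆⁻¹ := by
  have := comm_mul_right h x g⁻¹ g
  simp only [inv_mul_cancel] at this
  have h1 : ⁅x, (1:G)⁆ = 1 := by group
  rw [h1] at this
  exact eq_inv_of_mul_eq_one_left this.symm

/-- Conjugation fixes normal subgroups. -/
theorem conjAct_smul_of_normal (g : ConjAct G) (H : Subgroup G) (hH : H.Normal) :
    g • H = H := by
  ext a
  rw [Subgroup.mem_pointwise_smul_iff_inv_smul_mem, ConjAct.smul_def]
  constructor
  · intro ha
    have := hH.conj_mem _ ha (ConjAct.ofConjAct g)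
    simpa [mul_assoc] using this
  · intro ha
    exact hH.conj_mem _ ha (ConjAct.ofConjAct g⁻¹)

end Aux

theorem card_zClasses_of_extraspecial {G : Type*} [Group G] [Finite G] {p k : ℕ}
    (hp : p.Prime) (hG : IsExtraspecial p G)
    (hk : Nat.card (G ⧸ Subgroup.center G) = p ^ k) :
    Nat.card (Quot (zEquiv G)) = (p ^ k - 1) / (p - 1) + 1 := by
  classical
  obtain ⟨hpG, hcomm, hZ⟩ := hG
  -- commutators are central
  have hcc : ∀ a b : G, ⁅a, b⁆ ∈ Subgroup.center G := fun a b => by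
    rw [hcomm]
    exact Subgroup.commutator_mem_commutator (Subgroup.mem_top a) (Subgroup.mem_top b)
  -- commutators have order dividing p
  have hcp : ∀ a b : G, ⁅a, b⁆ ^ p = 1 := fun a b => by
    have : (⟨⁅a, b⁆, hcc a b⟩ : Subgroup.center G) ^ p = 1 := by rw [← hZ]; exact pow_card_eq_one'
    simpa [Subtype.ext_iff] using this
  -- p-th powers are central
  have hxp : ∀ x : G, x ^ p ∈ Subgroup.center G := fun x => by
    rw [Subgroup.mem_center_iff]
    intro g
    rw [← commutatorElement_eq_one_iff_mul_comm, comm_pow_right hcc g x, hcp]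
  set c : G → Subgroup G := fun x => Subgroup.centralizer {x} with hcdef
  have hmemc : ∀ x g : G, g ∈ c x ↔ ⁅x, g⁆ = 1 := fun x g => by
    rw [hcdef, Subgroup.mem_centralizer_singleton_iff, commutatorElement_eq_one_iff_mul_comm,
      eq_comm]
  have hct : ∀ x : G, x ∈ Subgroup.center G ↔ c x = ⊤ := by
    intro x
    constructor
    · intro hx
      rw [eq_top_iff]
      intro g _
      rw [hmemc, commutatorElement_eq_one_iff_mul_comm]
      exact (Subgroup.mem_center_iff.mp hx g).symm
    · intro hx
      rw [Subgroup.mem_center_iff]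
      intro g
      have : g ∈ c x := hx ▸ Subgroup.mem_top g
      rw [hmemc, commutatorElement_eq_one_iff_mul_comm] at this
      exact this.symm
  have hnormal : ∀ x : G, (c x).Normal := by
    intro x
    constructor
    intro n hn g
    have he : g * n * g⁻¹ = ⁅g, n⁆ * n := by group
    rw [he]
    exact Subgroup.mul_mem _ (Subgroup.center_le_centralizer {x} (hcc g n)) hn
  have hzeq : ∀ x y : G, zEquiv G x y ↔ c x = c y := by
    intro x y
    constructor
    · rintro ⟨g, hg⟩
      rwa [conjAct_smul_of_normal g _ (hnormal x)] at hg
    · intro h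
      exact ⟨1, by simpa using h⟩
  -- the quotient is equivalent to the range of c
  have e : Quot (zEquiv G) ≃ Set.range c :=
    (Quot.congr (Equiv.refl G) (fun a b => by
      simpa using (hzeq a b))).trans (Setoid.quotientKerEquivRange c)
  rw [Nat.card_congr e]
  -- powers of a noncentral element lie in the center iff p divides the exponent
  have hdvd : ∀ x : G, x ∉ Subgroup.center G → ∀ m : ℕ,
      (x ^ m ∈ Subgroup.center G ↔ p ∣ m) := by
    intro x hx m
    have h1 : ((x : G ⧸ Subgroup.center G)) ^ p = 1 := by
      rw [← QuotientGroup.mk_pow]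
      exact (QuotientGroup.eq_one_iff _).mpr (hxp x)
    have h2 : (x : G ⧸ Subgroup.center G) ≠ 1 := by
      simpa [QuotientGroup.eq_one_iff] using hx
    have hord : orderOf (x : G ⧸ Subgroup.center G) = p := by
      rcases hp.eq_one_or_self_of_dvd _ (orderOf_dvd_of_pow_eq_one h1) with h | h
      · exact absurd (orderOf_eq_one_iff.mp h) h2
      · exact h
    rw [← QuotientGroup.eq_one_iff, QuotientGroup.mk_pow, ← hord,
      orderOf_dvd_iff_pow_eq_one]
  -- backward direction: twisting by a power and a central element
  have hceq : ∀ x : G, ∀ j : ℕ, ¬ p ∣ j → ∀ z ∈ Subgroup.center G,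
      c (x ^ j * z) = c x := by
    intro x j hj z hz
    ext g
    rw [hmemc, hmemc]
    have hz1 : ⁅z, g⁆ = 1 :=
      commutatorElement_eq_one_iff_mul_comm.mpr (Subgroup.mem_center_iff.mp hz g).symm
    rw [comm_mul_left hcc, comm_pow_left hcc, hz1, mul_one,
      aux_pow_eq_one_iff hp (hcp x g) hj]
  -- forward direction
  have hkey : ∀ x y : G, x ∉ Subgroup.center G → y ∉ Subgroup.center G → c x = c y →
      ∃ j ∈ Finset.Ico 1 p, ∃ z ∈ Subgroup.center G, y = x ^ j * z := by
    intro x y hx hy hcxy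
    obtain ⟨g₀, hg₀⟩ : ∃ g₀ : G, ⁅x, g₀⁆ ≠ 1 := by
      by_contra hcon
      push_neg at hcon
      exact hx (Subgroup.mem_center_iff.mpr fun g =>
        (commutatorElement_eq_one_iff_mul_comm.mp (hcon g)).symm)
    set f : Subgroup.center G := ⟨⁅x, g₀⁆, hcc x g₀⟩ with hfdef
    have hf1 : f ≠ 1 := fun h => hg₀ (by simpa [hfdef, Subtype.ext_iff] using h)
    have hfp : f ^ p = 1 := by
      rw [Subtype.ext_iff]
      simpa [hfdef] using hcp x g₀
    have hford : orderOf f = p := by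
      rcases hp.eq_one_or_self_of_dvd _ (orderOf_dvd_of_pow_eq_one hfp) with h | h
      · exact absurd (orderOf_eq_one_iff.mp h) hf1
      · exact h
    have htop : Subgroup.zpowers f = ⊤ :=
      Subgroup.eq_top_of_card_eq _ (by rw [Nat.card_zpowers, hford, hZ])
    have hgen : ∀ w : Subgroup.center G, ∃ m : ℕ, f ^ m = w := by
      intro w
      have hw : w ∈ Subgroup.zpowers f := htop ▸ Subgroup.mem_top w
      have := (isOfFinOrder_of_finite f).mem_powers_iff_mem_zpowers.mpr hw
      exact (Submonoid.mem_powers_iff _ _).mp this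
    have hg₀y : ⁅y, g₀⁆ ≠ 1 := by
      have : g₀ ∉ c x := by rw [hmemc]; exact hg₀
      rw [hcxy, hmemc] at this
      exact this
    obtain ⟨m₀, hm₀⟩ := hgen ⟨⁅y, g₀⁆, hcc y g₀⟩
    set j := m₀ % p with hjdef
    have hjp : j < p := Nat.mod_lt _ hp.pos
    have hj1 : 1 ≤ j := by
      rcases Nat.eq_zero_or_pos j with h | h
      · exfalso
        have hdj : p ∣ m₀ := Nat.dvd_of_mod_eq_zero h
        have : f ^ m₀ = 1 := orderOf_dvd_iff_pow_eq_one.mp (hford ▸ hdj)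
        rw [hm₀] at this
        exact hg₀y (by simpa [Subtype.ext_iff] using this)
      · exact h
    have hpj : ¬ p ∣ j := fun h => absurd (Nat.le_of_dvd (by omega) h) (by omega)
    have hfj : f ^ j = f ^ m₀ := by rw [hjdef, ← hford, pow_mod_orderOf]
    have hmain : ∀ g : G, ⁅y, g⁆ = ⁅x, g⁆ ^ j := by
      intro g
      obtain ⟨m, hm⟩ := hgen ⟨⁅x, g⁆, hcc x g⟩
      have hmv : ⁅x, g₀⁆ ^ m = ⁅x, g⁆ := by
        have := congrArg Subtype.val hm
        simpa [hfdef] using this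
      have hh : g * (g₀ ^ m)⁻¹ ∈ c x := by
        rw [hmemc, comm_mul_right hcc, comm_inv_right hcc, comm_pow_right hcc, hmv,
          mul_inv_cancel]
      rw [hcxy, hmemc] at hh
      have h2 : ⁅y, g⁆ = ⁅y, g₀⁆ ^ m := by
        have hgw : g = (g * (g₀ ^ m)⁻¹) * g₀ ^ m := by group
        conv_lhs => rw [hgw]
        rw [comm_mul_right hcc, hh, one_mul, comm_pow_right hcc]
      have h3 : ⁅y, g₀⁆ ^ m = ⁅x, g⁆ ^ j := by
        have e1 : (⟨⁅y, g₀⁆, hcc y g₀⟩ : Subgroup.center G) ^ m = (f ^ m) ^ j := by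
          rw [← hm₀, ← hfj, ← pow_mul, ← pow_mul, Nat.mul_comm]
        have := congrArg Subtype.val e1
        simpa [hm] using this
      rw [h2, h3]
    refine ⟨j, Finset.mem_Ico.mpr ⟨hj1, hjp⟩, (x ^ j)⁻¹ * y, ?_, by group⟩
    rw [Subgroup.mem_center_iff]
    intro g
    have hone : ⁅(x ^ j)⁻¹ * y, g⁆ = 1 := by
      rw [comm_mul_left hcc, comm_inv_left hcc, comm_pow_left hcc, hmain g, inv_mul_cancel]
    exact (commutatorElement_eq_one_iff_mul_comm.mp hone).symm
  -- now count the range of c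
  letI : Fintype G := Fintype.ofFinite G
  set Zf : Finset G := Finset.univ.filter (fun x => x ∈ Subgroup.center G) with hZf
  set noncS : Finset G := Finset.univ.filter (fun x => x ∉ Subgroup.center G) with hnoncS
  set T : Finset (Subgroup G) := noncS.image c with hT
  have hrange : Set.range c = ↑(insert ⊤ T) := by
    ext H
    simp only [Set.mem_range, Finset.coe_insert, Set.mem_insert_iff, Finset.mem_coe, hT,
      Finset.mem_image]
    constructor
    · rintro ⟨x, rfl⟩
      by_cases hx : x ∈ Subgroup.center G
      · exact Or.inl ((hct x).mp hx)
      · exact Or.inr ⟨x, by simp [hnoncS, hx], rfl⟩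
    · rintro (rfl | ⟨x, hx, rfl⟩)
      · exact ⟨1, (hct 1).mp (Subgroup.one_mem _)⟩
      · exact ⟨x, rfl⟩
  have htopT : ⊤ ∉ T := by
    rw [hT]
    simp only [Finset.mem_image, not_exists]
    rintro x ⟨hx, hcx⟩
    have hx' : x ∉ Subgroup.center G := by simpa [hnoncS] using hx
    exact hx' ((hct x).mpr hcx)
  have hcard1 : Nat.card ↑(Set.range c) = T.card + 1 := by
    rw [hrange, Nat.card_coe_set_eq, Set.ncard_coe_finset,
      Finset.card_insert_of_notMem htopT]
  have hZfcard : Zf.card = p := by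
    rw [← hZ, Nat.card_eq_fintype_card, hZf, ← Fintype.card_subtype]
  have hfibcard : ∀ H ∈ T, (noncS.filter (fun y => c y = H)).card = p * (p - 1) := by
    intro H hH
    rw [hT, Finset.mem_image] at hH
    obtain ⟨x, hxS, rfl⟩ := hH
    have hx : x ∉ Subgroup.center G := by simpa [hnoncS] using hxS
    have hfib : noncS.filter (fun y => c y = c x)
        = (Finset.Ico 1 p ×ˢ Zf).image (fun q => x ^ q.1 * q.2) := by
      ext y
      simp only [Finset.mem_filter, Finset.mem_image, Finset.mem_product, Finset.mem_Ico,
        hnoncS, hZf, Finset.mem_univ, true_and]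
      constructor
      · rintro ⟨hy, hcy⟩
        obtain ⟨j, hj, z, hz, rfl⟩ := hkey x y hx hy hcy.symm
        exact ⟨(j, z), ⟨Finset.mem_Ico.mp hj, hz⟩, rfl⟩
      · rintro ⟨⟨j, z⟩, ⟨⟨hj1, hjp⟩, hz⟩, rfl⟩
        have hpj : ¬ p ∣ j := fun h => absurd (Nat.le_of_dvd (by omega) h) (by omega)
        constructor
        · intro hmem
          have hxj : x ^ j ∈ Subgroup.center G := by
            have := Subgroup.mul_mem _ hmem (Subgroup.inv_mem _ hz)
            simpa [mul_assoc] using this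
          exact hpj ((hdvd x hx j).mp hxj)
        · exact hceq x j hpj z hz
    have main : ∀ (j j' : ℕ) (z z' : G), j < p → j' ≤ j → z ∈ Subgroup.center G →
        z' ∈ Subgroup.center G → x ^ j * z = x ^ j' * z' → j = j' := by
      intro j j' z z' hjp hle hz hz' heq
      have h1 : x ^ (j - j') = z' * z⁻¹ := by
        have e1 : x ^ j' * (x ^ (j - j') * z) = x ^ j' * z' := by
          rw [← mul_assoc, ← pow_add, show j' + (j - j') = j by omega]; exact heq
        have e2 : x ^ (j - j') * z = z' := mul_left_cancel e1
        rw [← e2]; group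
      have h2 : x ^ (j - j') ∈ Subgroup.center G :=
        h1 ▸ Subgroup.mul_mem _ hz' (Subgroup.inv_mem _ hz)
      have h3 := (hdvd x hx _).mp h2
      have h0 : j - j' = 0 := Nat.eq_zero_of_dvd_of_lt h3 (by omega) |>.symm ▸ rfl
      omega
    have hinj : Set.InjOn (fun q : ℕ × G => x ^ q.1 * q.2)
        ↑(Finset.Ico 1 p ×ˢ Zf) := by
      rintro ⟨j, z⟩ hjz ⟨j', z'⟩ hjz' heq
      simp only [Finset.coe_product, Set.mem_prod, Finset.mem_coe, Finset.mem_Ico, hZf,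
        Finset.mem_filter, Finset.mem_univ, true_and] at hjz hjz'
      obtain ⟨⟨hj1, hjp⟩, hz⟩ := hjz
      obtain ⟨⟨hj1', hjp'⟩, hz'⟩ := hjz'
      simp only at heq
      have hjj : j = j' := by
        rcases le_total j' j with hle | hle
        · exact main j j' z z' hjp hle hz hz' heq
        · exact (main j' j z' z hjp' hle hz' hz heq.symm).symm
      subst hjj
      have hzz : z = z' := by
        exact mul_left_cancel heq
      simp [hzz]
    rw [hfib, Finset.card_image_of_injOn hinj, Finset.card_product, Nat.card_Ico,
      hZfcard, Nat.mul_comm]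
  have hsum : noncS.card = T.card * (p * (p - 1)) := by
    rw [Finset.card_eq_sum_card_fiberwise (fun x hx => Finset.mem_image_of_mem c hx),
      Finset.sum_congr rfl hfibcard, Finset.sum_const, smul_eq_mul]
  have hGcard : (Finset.univ : Finset G).card = p ^ k * p := by
    rw [Finset.card_univ, ← Nat.card_eq_fintype_card,
      Subgroup.card_eq_card_quotient_mul_card_subgroup (Subgroup.center G), hk, hZ]
  have hsplit : Zf.card + noncS.card = p ^ k * p := by
    rw [← hGcard, hZf, hnoncS]
    exact Finset.card_filter_add_card_filter_not _
  have hp2 : 2 ≤ p := hp.two_le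
  have hpk : 1 ≤ p ^ k := Nat.one_le_pow _ _ hp.pos
  have h2 : T.card * (p - 1) * p = (p ^ k - 1) * p := by
    have h1 : T.card * (p * (p - 1)) = p ^ k * p - p := by omega
    calc T.card * (p - 1) * p = T.card * (p * (p - 1)) := by ring
      _ = p ^ k * p - p := h1
      _ = (p ^ k - 1) * p := by rw [Nat.sub_mul, one_mul]
  have h3 : T.card * (p - 1) = p ^ k - 1 := Nat.eq_of_mul_eq_mul_right hp.pos h2
  rw [hcard1, ← h3, Nat.mul_div_cancel _ (by omega : 0 < p - 1)]
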